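/- In Setting A, the set Γ contains 0, is closed under addition (hence is a submonoid of ℤ^d), and is semisaturated in ℤ^d: for every m ∈ ℤ^d, if 2•m ∈ Γ and 3•m ∈ Γ then m ∈ Γ. -/

import Mathlib

/-- The subgroup `ℤ^d ⊆ ℝ^d` of vectors with integer coordinates. -/
def intLattice (d : ℕ) : AddSubgroup (Fin d → ℝ) where
  carrier := {x | ∀ i, ∃ z : ℤ, x i = (z : ℝ)}
  zero_mem' := fun i => ⟨0, by simp⟩
  add_mem' := by
    intro a b ha hb i
    obtain ⟨z, hz⟩ := ha i
    obtain ⟨w, hw⟩ := hb i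
    exact ⟨z + w, by simp [hz, hw]⟩
  neg_mem' := by
    intro a ha i
    obtain ⟨z, hz⟩ := ha i
    exact ⟨-z, by simp [hz]⟩

/-- Setting A: `e₁,…,e_d` is an integral basis of `ℝ^d`; for `J ⊆ {1,…,d}`,
`τ_J` is the cone generated by the `e_j`, `j ∈ J`, and `relint τ_J` its relative
interior; `G_J` are subgroups with `G_{{1,…,d}} = ℤ^d` and, for `J ⊆ J'`, `G_J` of
finite index in `G_{J'} ∩ span{e_j : j ∈ J}`; and `Γ = ⋃_J (G_J ∩ relint τ_J)`.
Then `Γ` is a submonoid of `ℤ^d` which is semisaturated in `ℤ^d`. -/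
theorem gamma_semisaturated (d : ℕ) (hd : 1 ≤ d)
    (e : Fin d → (Fin d → ℝ))
    (hindep : LinearIndependent ℝ e)
    (hspan : Submodule.span ℝ (Set.range e) = ⊤)
    (hint : ∀ i j, ∃ z : ℤ, e i j = (z : ℝ))
    (τ : Finset (Fin d) → Set (Fin d → ℝ))
    (hτ : ∀ J, τ J = {x | ∃ lam : Fin d → ℝ,
      (∀ j ∈ J, 0 ≤ lam j) ∧ x = ∑ j ∈ J, lam j • e j})
    (relint : Finset (Fin d) → Set (Fin d → ℝ))
    (hrelint : ∀ J, relint J = {x | ∃ lam : Fin d → ℝ,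
      (∀ j ∈ J, 0 < lam j) ∧ x = ∑ j ∈ J, lam j • e j})
    (G : Finset (Fin d) → AddSubgroup (Fin d → ℝ))
    (hGtop : G Finset.univ = intLattice d)
    (hGle : ∀ J J' : Finset (Fin d), J ⊆ J' →
      G J ≤ (G J') ⊓ (Submodule.span ℝ (e '' (J : Set (Fin d)))).toAddSubgroup)
    (hGfin : ∀ J J' : Finset (Fin d), J ⊆ J' →
      ((G J).addSubgroupOf
        ((G J') ⊓ (Submodule.span ℝ (e '' (J : Set (Fin d)))).toAddSubgroup)).FiniteIndex)
    (Γ : Set (Fin d → ℝ))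
    (hΓ : Γ = ⋃ J : Finset (Fin d), ((G J : Set (Fin d → ℝ)) ∩ relint J)) :
    (0 : Fin d → ℝ) ∈ Γ ∧
    (∀ x ∈ Γ, ∀ y ∈ Γ, x + y ∈ Γ) ∧
    Γ ⊆ (intLattice d : Set (Fin d → ℝ)) ∧
    (∀ m ∈ intLattice d, 2 • m ∈ Γ → 3 • m ∈ Γ → m ∈ Γ) := by
  classical
  have hb : Module.Basis (Fin d) ℝ (Fin d → ℝ) := Module.Basis.mk hindep hspan.ge
  set b : Module.Basis (Fin d) ℝ (Fin d → ℝ) := Module.Basis.mk hindep hspan.ge with hbdef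
  have hbe : ∀ i, b i = e i := fun i => by rw [hbdef, Module.Basis.coe_mk]
  have hsum : ∀ (J : Finset (Fin d)) (lam : Fin d → ℝ),
      (∑ j ∈ J, lam j • e j) = ∑ j, (if j ∈ J then lam j else 0) • e j := by
    intro J lam
    rw [show (∑ j, (if j ∈ J then lam j else 0) • e j)
        = ∑ j ∈ J, (if j ∈ J then lam j else 0) • e j from
      (Finset.sum_subset (Finset.subset_univ J)
        (fun j _ hj => by rw [if_neg hj, zero_smul])).symm]
    exact Finset.sum_congr rfl (fun j hj => by rw [if_pos hj])
  have hrepr : ∀ (J : Finset (Fin d)) (lam : Fin d → ℝ),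
      ⇑(b.repr (∑ j ∈ J, lam j • e j)) = fun j => if j ∈ J then lam j else 0 := by
    intro J lam
    rw [hsum]
    have h2 : (∑ j, (if j ∈ J then lam j else 0) • e j)
        = ∑ j, (if j ∈ J then lam j else 0) • b j := by
      simp only [hbe]
    rw [h2, b.repr_sum_self]
  have hmem : ∀ (J : Finset (Fin d)) (x : Fin d → ℝ),
      x ∈ relint J ↔ ((∀ j ∈ J, 0 < b.repr x j) ∧ (∀ j ∉ J, b.repr x j = 0)) := by
    intro J x
    rw [hrelint]
    constructor
    · rintro ⟨lam, hpos, rfl⟩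
      rw [hrepr]
      constructor
      · intro j hj; simpa [if_pos hj] using hpos j hj
      · intro j hj; simp [if_neg hj]
    · rintro ⟨hpos, hzero⟩
      refine ⟨fun j => b.repr x j, hpos, ?_⟩
      have : (∑ j ∈ J, (b.repr x j) • e j) = ∑ j, (b.repr x j) • b j := by
        rw [hsum]
        refine Finset.sum_congr rfl (fun j _ => ?_)
        rw [hbe]
        by_cases hj : j ∈ J
        · rw [if_pos hj]
        · rw [if_neg hj, hzero j hj]
      rw [this, b.sum_repr]
  refine ⟨?_, ?_, ?_, ?_⟩
  · -- 0 ∈ Γ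
    rw [hΓ]
    refine Set.mem_iUnion.mpr ⟨∅, (G ∅).zero_mem, ?_⟩
    rw [hrelint]
    exact ⟨0, by simp, by simp⟩
  · -- closed under addition
    intro x hx y hy
    rw [hΓ] at hx hy ⊢
    obtain ⟨_, ⟨J, rfl⟩, hxG, hxR⟩ := hx
    obtain ⟨_, ⟨K, rfl⟩, hyG, hyR⟩ := hy
    refine Set.mem_iUnion.mpr ⟨J ∪ K, ?_, ?_⟩
    · exact AddSubgroup.add_mem _ ((hGle J (J ∪ K) Finset.subset_union_left hxG).1)
        ((hGle K (J ∪ K) Finset.subset_union_right hyG).1)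
    · rw [hmem] at hxR hyR ⊢
      have hxnn : ∀ j, 0 ≤ b.repr x j := by
        intro j
        by_cases hj : j ∈ J
        · exact (hxR.1 j hj).le
        · exact (hxR.2 j hj).ge
      have hynn : ∀ j, 0 ≤ b.repr y j := by
        intro j
        by_cases hj : j ∈ K
        · exact (hyR.1 j hj).le
        · exact (hyR.2 j hj).ge
      constructor
      · intro j hj
        rw [map_add, Finsupp.add_apply]
        rcases Finset.mem_union.mp hj with hj | hj
        · exact add_pos_of_pos_of_nonneg (hxR.1 j hj) (hynn j)
        · exact add_pos_of_nonneg_of_pos (hxnn j) (hyR.1 j hj)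
      · intro j hj
        rw [Finset.mem_union, not_or] at hj
        rw [map_add, Finsupp.add_apply, hxR.2 j hj.1, hyR.2 j hj.2, add_zero]
  · -- Γ ⊆ intLattice
    intro x hx
    rw [hΓ] at hx
    obtain ⟨_, ⟨J, rfl⟩, hxG, _⟩ := hx
    have := (hGle J Finset.univ (Finset.subset_univ J) hxG).1
    rwa [hGtop] at this
  · -- semisaturated
    intro m _ h2 h3
    rw [hΓ] at h2 h3 ⊢
    obtain ⟨_, ⟨J, rfl⟩, h2G, h2R⟩ := h2
    obtain ⟨_, ⟨K, rfl⟩, h3G, h3R⟩ := h3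
    rw [hmem] at h2R h3R
    have hr2 : ∀ j, b.repr (2 • m) j = 2 * b.repr m j := by
      intro j
      rw [map_nsmul, Finsupp.smul_apply]
      simp [nsmul_eq_mul]
    have hr3 : ∀ j, b.repr (3 • m) j = 3 * b.repr m j := by
      intro j
      rw [map_nsmul, Finsupp.smul_apply]
      simp [nsmul_eq_mul]
    have hJpos : ∀ j ∈ J, 0 < b.repr m j := by
      intro j hj
      have := h2R.1 j hj
      rw [hr2] at this
      linarith
    have hJzero : ∀ j ∉ J, b.repr m j = 0 := by
      intro j hj
      have := h2R.2 j hj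
      rw [hr2] at this
      linarith
    have hKJ : K = J := by
      ext j
      constructor
      · intro hj
        by_contra hjJ
        have h1 := h3R.1 j hj
        rw [hr3] at h1
        have h0 := hJzero j hjJ
        rw [h0] at h1
        linarith
      · intro hj
        by_contra hjK
        have h1 := h3R.2 j hjK
        rw [hr3] at h1
        have h0 := hJpos j hj
        nlinarith
    refine Set.mem_iUnion.mpr ⟨J, ?_, ?_⟩
    · have h3G' : 3 • m ∈ G J := by rw [← hKJ]; exact h3G
      have hsub : (3 : ℕ) • m - (2 : ℕ) • m = m := by
        rw [← Nat.cast_smul_eq_nsmul ℝ, ← Nat.cast_smul_eq_nsmul ℝ, ← sub_smul]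
        norm_num
      have := AddSubgroup.sub_mem (G J) h3G' h2G
      rwa [hsub] at this
    · rw [hmem]
      exact ⟨hJpos, hJzero⟩
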